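/- With the notation of the iterated-integral lemma (z nonnegative, Z(s,t)=∫_s^t z, pairwise distinct l₀,…,l_{m+1}), the inductive step holds: ∫_s^t exp(−l_{m+1} Z(u,t)) · (∑_{i=0}^{m} αᵢ⁽ᵐ⁾ e^{−l_i Z(s,u)}) z(u) du = ∑_{i=0}^{m+1} αᵢ⁽ᵐ⁺¹⁾(l₀,…,l_{m+1}) e^{−l_i Z(s,t)}. -/

import Mathlib

open Finset MeasureTheory intervalIntegral

noncomputable def alphaCoef (l : ℕ → ℝ) : ℕ → ℕ → ℝ
  | 0, _ => 1
  | m + 1, i =>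
    if i ≤ m then alphaCoef l m i / (l (m + 1) - l i)
    else -(∑ j ∈ Finset.range (m + 1), alphaCoef l m j / (l (m + 1) - l j))

set_option linter.unusedVariables false

open Set in
lemma key_exp_integral (z : ℝ → ℝ) (hz : ∀ u, 0 ≤ z u)
    (hzint : ∀ a b : ℝ, IntervalIntegrable z MeasureTheory.volume a b)
    (s t : ℝ) (hst : s ≤ t) (c : ℝ) (hc : c ≠ 0) :
    (∫ u in s..t, Real.exp (c * ∫ h in s..u, z h) * z u)
      = (Real.exp (c * ∫ h in s..t, z h) - 1) / c := by
  set F : ℝ → ℝ := fun u => ∫ h in s..u, z h with hFdef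
  have hFcont : Continuous F := continuous_primitive hzint s
  have hFmono : Monotone F := by
    intro a b hab
    have hadd := integral_add_adjacent_intervals (hzint s a) (hzint a b)
    have hnn : 0 ≤ ∫ h in a..b, z h :=
      intervalIntegral.integral_nonneg hab (fun u _ => hz u)
    simp only [F, ← hadd]; linarith
  have hFs : F s = 0 := integral_same
  have hFt0 : 0 ≤ F t := by rw [← hFs]; exact hFmono hst
  set μ0 : Measure ℝ := volume.restrict (Set.Ioc s t) with hμ0
  set d : ℝ → NNReal := fun u => (z u).toNNReal with hd
  have hzib : IntegrableOn z (Set.Ioc s t) volume := (hzint s t).1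
  have hdm : AEMeasurable d μ0 :=
    measurable_real_toNNReal.comp_aemeasurable hzib.aemeasurable
  set ν : Measure ℝ := μ0.withDensity (fun u => (d u : ENNReal)) with hν
  have hcoe : ∀ u, ((d u : ENNReal)) = ENNReal.ofReal (z u) := fun u => rfl
  have hofint : ∀ v, s ≤ v → v ≤ t →
      ∫⁻ u in Set.Ioc s v, (d u : ENNReal) ∂volume = ENNReal.ofReal (F v) := by
    intro v hsv hvt
    have hint : IntegrableOn z (Set.Ioc s v) volume := (hzint s v).1
    rw [show (fun u => (d u : ENNReal)) = fun u => ENNReal.ofReal (z u) from rfl,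
      ← ofReal_integral_eq_lintegral_ofReal hint (ae_of_all _ hz)]
    congr 1
    exact (intervalIntegral.integral_of_le hsv).symm
  haveI : IsFiniteMeasure ν := by
    constructor
    rw [hν, withDensity_apply _ MeasurableSet.univ, hμ0, Measure.restrict_restrict MeasurableSet.univ,
      Set.univ_inter, hofint t hst le_rfl]
    exact ENNReal.ofReal_lt_top
  have hmap : ν.map F = volume.restrict (Set.Ioc 0 (F t)) := by
    refine Measure.ext_of_Iic _ _ (fun x => ?_)
    rw [Measure.map_apply hFcont.measurable measurableSet_Iic, hν,
      withDensity_apply _ (hFcont.measurable measurableSet_Iic), hμ0,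
      Measure.restrict_restrict (hFcont.measurable measurableSet_Iic),
      Measure.restrict_apply measurableSet_Iic]
    rcases lt_or_ge x 0 with hx | hx
    · have h1 : F ⁻¹' Set.Iic x ∩ Set.Ioc s t = ∅ := by
        ext u
        simp only [Set.mem_inter_iff, Set.mem_preimage, Set.mem_Iic, Set.mem_Ioc,
          Set.mem_empty_iff_false, iff_false]
        rintro ⟨hFu, hsu, hut⟩
        have : (0:ℝ) ≤ F u := by rw [← hFs]; exact hFmono hsu.le
        linarith
      have h2 : Set.Iic x ∩ Set.Ioc 0 (F t) = ∅ := by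
        ext u
        simp only [Set.mem_inter_iff, Set.mem_Iic, Set.mem_Ioc,
          Set.mem_empty_iff_false, iff_false]
        rintro ⟨hux, hu0, -⟩
        linarith
      rw [h1, h2]; simp
    · set K : Set ℝ := Set.Icc s t ∩ F ⁻¹' Set.Iic x with hK
      have hKc : IsCompact K :=
        isCompact_Icc.inter_right (isClosed_Iic.preimage hFcont)
      have hKne : K.Nonempty := ⟨s, ⟨le_rfl, hst⟩, by simp [hFs, hx]⟩
      set v : ℝ := sSup K with hv
      have hvK : v ∈ K := hKc.sSup_mem hKne
      obtain ⟨⟨hsv, hvt⟩, hFvx⟩ := hvK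
      simp only [Set.mem_preimage, Set.mem_Iic] at hFvx
      have hset : F ⁻¹' Set.Iic x ∩ Set.Ioc s t = Set.Ioc s v := by
        ext u
        simp only [Set.mem_inter_iff, Set.mem_preimage, Set.mem_Iic, Set.mem_Ioc]
        constructor
        · rintro ⟨hFu, hsu, hut⟩
          exact ⟨hsu, le_csSup hKc.bddAbove ⟨⟨hsu.le, hut⟩, hFu⟩⟩
        · rintro ⟨hsu, huv⟩
          exact ⟨(hFmono huv).trans hFvx, hsu, huv.trans hvt⟩
      have hFv : F v = min x (F t) := by
        rcases le_or_gt (F t) x with h | h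
        · have htK : t ∈ K := ⟨⟨hst, le_rfl⟩, h⟩
          have : v = t := le_antisymm hvt (le_csSup hKc.bddAbove htK)
          rw [this, min_eq_right h]
        · obtain ⟨w, hw, hFw⟩ :=
            intermediate_value_Icc hvt hFcont.continuousOn ⟨hFvx, h.le⟩
          have hwK : w ∈ K := ⟨⟨hsv.trans hw.1, hw.2⟩, hFw.le⟩
          have hwv : w ≤ v := le_csSup hKc.bddAbove hwK
          have : x ≤ F v := hFw ▸ hFmono hwv
          rw [min_eq_left h.le]; linarith
      have h2 : Set.Iic x ∩ Set.Ioc 0 (F t) = Set.Ioc 0 (min x (F t)) := by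
        ext u
        simp only [Set.mem_inter_iff, Set.mem_Iic, Set.mem_Ioc, le_min_iff]
        constructor
        · rintro ⟨h1, h2, h3⟩; exact ⟨h2, h1, h3⟩
        · rintro ⟨h1, h2, h3⟩; exact ⟨h2, h1, h3⟩
      rw [hset, hofint v hsv hvt, hFv, h2, Real.volume_Ioc, sub_zero]
  have hg : Continuous fun x : ℝ => Real.exp (c * x) :=
    Real.continuous_exp.comp (continuous_const.mul continuous_id)
  have h1 : ∫ x, Real.exp (c * x) ∂(ν.map F)
      = ∫ u, Real.exp (c * F u) * z u ∂μ0 := by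
    rw [integral_map hFcont.measurable.aemeasurable hg.aestronglyMeasurable, hν,
      integral_withDensity_eq_integral_smul₀ hdm]
    refine integral_congr_ae (ae_of_all _ fun u => ?_)
    simp [hd, NNReal.smul_def, Real.coe_toNNReal _ (hz u), mul_comm]
  have h2 : ∫ x, Real.exp (c * x) ∂(ν.map F)
      = (Real.exp (c * F t) - 1) / c := by
    rw [hmap, ← intervalIntegral.integral_of_le hFt0]
    have := intervalIntegral.integral_comp_mul_left (a := (0:ℝ)) (b := F t) Real.exp hc
    rw [this, integral_exp]
    simp [mul_zero, Real.exp_zero, smul_eq_mul]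
    ring
  rw [intervalIntegral.integral_of_le hst]
  rw [← h1, h2]

/-- The inductive step in the proof of Lemma B.1:
`∫_s^t e^{−l_{m+1} Z(u,t)} (∑_{i≤m} αᵢ⁽ᵐ⁾ e^{−l_i Z(s,u)}) z(u) du
  = ∑_{i≤m+1} αᵢ⁽ᵐ⁺¹⁾ e^{−l_i Z(s,t)}`, where `Z(a,b) = ∫_a^b z`. -/
theorem alphaCoef_inductive_step (z : ℝ → ℝ) (hz : ∀ u, 0 ≤ z u)
    (hzint : ∀ a b : ℝ, IntervalIntegrable z MeasureTheory.volume a b)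
    (l : ℕ → ℝ) (m : ℕ)
    (hdist : ∀ i j, i ≤ m + 1 → j ≤ m + 1 → i ≠ j → l i ≠ l j)
    (s t : ℝ) (hs : 0 ≤ s) (hst : s < t) :
    (∫ u in s..t,
        Real.exp (-(l (m + 1)) * ∫ h in u..t, z h)
          * (∑ i ∈ Finset.range (m + 1),
              alphaCoef l m i * Real.exp (-(l i) * ∫ h in s..u, z h)) * z u)
      = ∑ i ∈ Finset.range (m + 2),
          alphaCoef l (m + 1) i * Real.exp (-(l i) * ∫ h in s..t, z h) := by
  set L := l (m + 1) with hL
  set T := ∫ h in s..t, z h with hT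
  set F : ℝ → ℝ := fun u => ∫ h in s..u, z h with hF
  have hFut : ∀ u : ℝ, (∫ h in u..t, z h) = T - F u := by
    intro u
    have := integral_add_adjacent_intervals (hzint s u) (hzint u t)
    simp only [F, T, ← this]; ring
  have hne : ∀ i ∈ Finset.range (m + 1), L - l i ≠ 0 := by
    intro i hi
    have him := Finset.mem_range.mp hi
    exact sub_ne_zero_of_ne (hdist (m + 1) i le_rfl (by omega) (by omega))
  have hint : ∀ c : ℝ, IntervalIntegrable
      (fun u => Real.exp (c * F u) * z u) volume s t := by
    intro c
    exact (hzint s t).continuousOn_mul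
      ((Real.continuous_exp.comp (continuous_const.mul
        (continuous_primitive hzint s))).continuousOn)
  calc (∫ u in s..t,
        Real.exp (-L * ∫ h in u..t, z h)
          * (∑ i ∈ Finset.range (m + 1),
              alphaCoef l m i * Real.exp (-(l i) * F u)) * z u)
      = ∫ u in s..t, ∑ i ∈ Finset.range (m + 1),
          (alphaCoef l m i * Real.exp (-L * T)) * (Real.exp ((L - l i) * F u) * z u) := by
        refine intervalIntegral.integral_congr fun u hu => ?_
        rw [hFut u, Finset.mul_sum, Finset.sum_mul]
        refine Finset.sum_congr rfl fun i _ => ?_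
        have hE : Real.exp (-L * (T - F u)) * Real.exp (-(l i) * F u)
            = Real.exp (-L * T) * Real.exp ((L - l i) * F u) := by
          rw [← Real.exp_add, ← Real.exp_add]; congr 1; ring
        calc Real.exp (-L * (T - F u)) * (alphaCoef l m i * Real.exp (-(l i) * F u)) * z u
            = (Real.exp (-L * (T - F u)) * Real.exp (-(l i) * F u)) * alphaCoef l m i * z u := by ring
          _ = (Real.exp (-L * T) * Real.exp ((L - l i) * F u)) * alphaCoef l m i * z u := by rw [hE]
          _ = alphaCoef l m i * Real.exp (-L * T) * (Real.exp ((L - l i) * F u) * z u) := by ring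
    _ = ∑ i ∈ Finset.range (m + 1),
          (alphaCoef l m i * Real.exp (-L * T)) * ∫ u in s..t, Real.exp ((L - l i) * F u) * z u := by
        rw [intervalIntegral.integral_finset_sum
          (fun i _ => (hint (L - l i)).const_mul _)]
        exact Finset.sum_congr rfl fun i _ => intervalIntegral.integral_const_mul _ _
    _ = ∑ i ∈ Finset.range (m + 1),
          (alphaCoef l m i * Real.exp (-L * T)) * ((Real.exp ((L - l i) * T) - 1) / (L - l i)) := by
        refine Finset.sum_congr rfl fun i hi => ?_
        rw [key_exp_integral z hz hzint s t hst.le _ (hne i hi)]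
    _ = ∑ i ∈ Finset.range (m + 1),
          (alphaCoef l m i / (L - l i) * Real.exp (-(l i) * T)
            - alphaCoef l m i / (L - l i) * Real.exp (-L * T)) := by
        refine Finset.sum_congr rfl fun i hi => ?_
        have hE : Real.exp (-L * T) * Real.exp ((L - l i) * T) = Real.exp (-(l i) * T) := by
          rw [← Real.exp_add]; congr 1; ring
        rw [← hE]
        ring
    _ = ∑ i ∈ Finset.range (m + 2),
          alphaCoef l (m + 1) i * Real.exp (-(l i) * T) := by
        rw [Finset.sum_sub_distrib, ← Finset.sum_mul]
        have h1 : ∀ i ∈ Finset.range (m + 1),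
            alphaCoef l (m + 1) i * Real.exp (-(l i) * T)
              = alphaCoef l m i / (L - l i) * Real.exp (-(l i) * T) := by
          intro i hi
          have : i ≤ m := by have := Finset.mem_range.mp hi; omega
          simp [alphaCoef, this, hL]
        have h2 : alphaCoef l (m + 1) (m + 1)
            = -(∑ j ∈ Finset.range (m + 1), alphaCoef l m j / (L - l j)) := by
          simp [alphaCoef, hL]
        conv_rhs => rw [show m + 2 = (m + 1) + 1 from rfl, Finset.sum_range_succ,
          Finset.sum_congr rfl h1, h2]
        ring
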